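/- A marked digraph G satisfies both Property P1 and Property P2 if and only if its vertex set can be partitioned into vertex-disjoint observed paths. -/

import Mathlib

set_option linter.unusedSectionVars false


/-- `u` is the unique in-neighbor of `w` in the digraph with edge relation `E`. -/
def UniqueInNbr {V : Type*} (E : V → V → Prop) (u w : V) : Prop :=
  E u w ∧ ∀ u', E u' w → u' = u

/-- Property P1: every simple (non-marked) vertex `v` has some vertex `v'`
whose unique in-neighbor is `v`. -/
def SatisfiesP1 {V : Type*} (E : V → V → Prop) (O : Set V) : Prop :=
  ∀ v, v ∉ O → ∃ v', UniqueInNbr E v v'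

/-- A directed (simple) cycle of length `m + 1`, given by an injective cyclic
sequence of vertices with consecutive edges (indices mod `m + 1`). -/
def IsCycle {V : Type*} (E : V → V → Prop) {m : ℕ} (c : Fin (m + 1) → V) : Prop :=
  Function.Injective c ∧ ∀ j, E (c j) (c (j + 1))

/-- A cycle `c` satisfies Property P2 if some vertex `v` off the cycle has a
vertex of the cycle as its unique in-neighbor. -/
def CycleSatisfiesP2 {V : Type*} (E : V → V → Prop) {m : ℕ} (c : Fin (m + 1) → V) : Prop :=
  ∃ v, (∀ j, c j ≠ v) ∧ ∃ j, UniqueInNbr E (c j) v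

/-- Property P2: every directed cycle consisting entirely of simple vertices
satisfies Property P2. -/
def SatisfiesP2 {V : Type*} (E : V → V → Prop) (O : Set V) : Prop :=
  ∀ (m : ℕ) (c : Fin (m + 1) → V), IsCycle E c → (∀ j, c j ∉ O) → CycleSatisfiesP2 E c

/-- An observed path: an injective directed path whose terminal vertex is the
unique marked vertex on the path, and each vertex is the unique in-neighbor of
its successor on the path. -/
def IsObservedPath {V : Type*} (E : V → V → Prop) (O : Set V) {s : ℕ}
    (p : Fin (s + 1) → V) : Prop :=
  Function.Injective p ∧
  (∀ k : Fin s, UniqueInNbr E (p k.castSucc) (p k.succ)) ∧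
  p (Fin.last s) ∈ O ∧
  (∀ k, p k ∈ O → k = Fin.last s)

/-- The vertex set can be partitioned into vertex-disjoint observed paths. -/
def ObservedPathPartition {V : Type*} (E : V → V → Prop) (O : Set V) : Prop :=
  ∃ (r : ℕ) (ℓ : Fin r → ℕ) (p : (i : Fin r) → Fin (ℓ i + 1) → V),
    (∀ i, IsObservedPath E O (p i)) ∧
    (Pairwise fun i j => Disjoint (Set.range (p i)) (Set.range (p j))) ∧
    (⋃ i, Set.range (p i)) = Set.univ

section Aux
variable {V : Type*} [Fintype V] (E : V → V → Prop) (O : Set V)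

/-- A "good" successor function: maps every simple vertex to a vertex of which
it is the unique in-neighbor. -/
def GoodFun (σ : V → V) : Prop := ∀ v ∉ O, UniqueInNbr E v (σ v)

/-- `v` lies on a σ-cycle all of whose vertices are simple. -/
def InCyc (σ : V → V) (v : V) : Prop :=
  ∃ n, 0 < n ∧ σ^[n] v = v ∧ ∀ k < n, σ^[k] v ∉ O

variable {E O}
open Fin.NatCast Fin.CommRing

lemma good_inj {σ : V → V} (hσ : GoodFun E O σ) {u1 u2 : V}
    (h1 : u1 ∉ O) (h2 : u2 ∉ O) (h : σ u1 = σ u2) : u1 = u2 := by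
  have h1' := hσ u1 h1
  have h2' := hσ u2 h2
  exact h2'.2 u1 (h ▸ h1'.1)

lemma decrease (hP2 : SatisfiesP2 E O) {σ : V → V} (hσ : GoodFun E O σ)
    (hne : ∃ v, InCyc O σ v) :
    ∃ σ', GoodFun E O σ' ∧ {v | InCyc O σ' v}.ncard < {v | InCyc O σ v}.ncard := by
  classical
  obtain ⟨v0, n0, hn0, hper0, hO0⟩ := hne
  have hp0 : Function.IsPeriodicPt σ n0 v0 := hper0
  set n := Function.minimalPeriod σ v0 with hn
  have hnpos : 0 < n := hp0.minimalPeriod_pos hn0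
  have hnle : n ≤ n0 := hp0.minimalPeriod_le hn0
  obtain ⟨m, hm⟩ : ∃ m, n = m + 1 := ⟨n - 1, (Nat.succ_pred_eq_of_pos hnpos).symm⟩
  set c : Fin (m + 1) → V := fun j => σ^[j.val] v0 with hcdef
  have hcO : ∀ j, c j ∉ O := fun j => hO0 j.val (by have := j.isLt; omega)
  have hinj : Function.Injective c := by
    intro a b hab
    have ha : (a : ℕ) ∈ Set.Iio (Function.minimalPeriod σ v0) := by
      rw [← hn, hm]; exact a.isLt
    have hb : (b : ℕ) ∈ Set.Iio (Function.minimalPeriod σ v0) := by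
      rw [← hn, hm]; exact b.isLt
    exact Fin.ext (Function.iterate_injOn_Iio_minimalPeriod ha hb hab)
  have hstep : ∀ j : Fin (m + 1), σ (c j) = c (j + 1) := by
    intro j
    show σ (σ^[j.val] v0) = σ^[(j + 1).val] v0
    rw [← Function.iterate_succ_apply' σ j.val v0]
    by_cases h : j = Fin.last m
    · subst h
      have h2 : (Fin.last m + 1).val = 0 := by
        simp [Fin.val_add_one]
      rw [h2]
      simp only [Fin.val_last]
      show σ^[m + 1] v0 = σ^[0] v0
      rw [← hm]
      exact Function.isPeriodicPt_minimalPeriod σ v0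
    · have h2 : (j + 1).val = j.val + 1 :=
        Fin.val_add_one_of_lt (lt_of_le_of_ne (Fin.le_last j) h)
      rw [h2]
  have hcyc : IsCycle E c := ⟨hinj, fun j => hstep j ▸ (hσ _ (hcO j)).1⟩
  obtain ⟨w, hwoff, j0, hwin⟩ := hP2 m c hcyc hcO
  set σ' := Function.update σ (c j0) w with hσ'def
  have hσ'j0 : σ' (c j0) = w := Function.update_self _ _ _
  have hσ'ne : ∀ x, x ≠ c j0 → σ' x = σ x := fun x hx => Function.update_of_ne hx _ _
  have hσ' : GoodFun E O σ' := by
    intro u hu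
    by_cases h : u = c j0
    · rw [h, hσ'j0]; exact h ▸ hwin
    · rw [hσ'ne u h]; exact hσ u hu
  have hiter : ∀ (j : Fin (m + 1)) (t : ℕ), σ^[t] (c j) = c (j + (t : Fin (m + 1))) := by
    intro j t
    induction t with
    | zero => simp
    | succ t ih =>
      rw [Function.iterate_succ_apply', ih, hstep]
      congr 1
      push_cast
      ring
  have hj0cyc : InCyc O σ (c j0) := by
    refine ⟨n, hnpos, ?_, fun t _ => by rw [hiter]; exact hcO _⟩
    rw [hiter j0 n, hm, Fin.natCast_self, add_zero]
  have hpre : ∀ x, x ∉ O → ∀ j, σ x = c j → x = c (j - 1) := by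
    intro x hx j hxj
    apply good_inj hσ hx (hcO (j - 1))
    rw [hstep (j - 1), sub_add_cancel]
    exact hxj
  have hA : ¬ InCyc O σ' (c j0) := by
    rintro ⟨n', hn', hper, hO'⟩
    have key : ∀ t ≤ n' - 1, ∃ j, σ'^[n' - t] (c j0) = c j := by
      intro t ht
      induction t with
      | zero => exact ⟨j0, by simpa using hper⟩
      | succ t ih =>
        obtain ⟨j, hj⟩ := ih (le_trans (Nat.le_succ t) ht)
        have h1 : n' - t = (n' - (t + 1)) + 1 := by omega
        rw [h1, Function.iterate_succ_apply'] at hj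
        have hxO : σ'^[n' - (t + 1)] (c j0) ∉ O := hO' _ (by omega)
        by_cases hxc : σ'^[n' - (t + 1)] (c j0) = c j0
        · exfalso
          rw [hxc, hσ'j0] at hj
          exact hwoff j hj.symm
        · rw [hσ'ne _ hxc] at hj
          exact ⟨j - 1, hpre _ hxO j hj⟩
    obtain ⟨j, hj⟩ := key (n' - 1) le_rfl
    have h1 : n' - (n' - 1) = 1 := by omega
    rw [h1, Function.iterate_one, hσ'j0] at hj
    exact hwoff j hj.symm
  have hB : {v | InCyc O σ' v} ⊆ {v | InCyc O σ v} \ {c j0} := by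
    rintro u ⟨n'', hn'', hper, hO''⟩
    have hpp : Function.IsPeriodicPt σ' n'' u := hper
    have havoid : ∀ t < n'', σ'^[t] u ≠ c j0 := by
      intro t ht htc
      apply hA
      refine ⟨n'', hn'', ?_, ?_⟩
      · rw [← htc, ← Function.iterate_add_apply, add_comm, Function.iterate_add_apply, hper]
      · intro s hs
        rw [← htc, ← Function.iterate_add_apply, ← hpp.iterate_mod_apply (s + t)]
        exact hO'' _ (Nat.mod_lt _ hn'')
    have heqs : ∀ t ≤ n'', σ'^[t] u = σ^[t] u := by
      intro t ht
      induction t with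
      | zero => rfl
      | succ t ih =>
        rw [Function.iterate_succ_apply', Function.iterate_succ_apply',
          hσ'ne _ (havoid t (by omega)), ih (by omega)]
    constructor
    · refine ⟨n'', hn'', ?_, fun t ht => ?_⟩
      · rw [← heqs n'' le_rfl]; exact hper
      · rw [← heqs t (le_of_lt ht)]; exact hO'' t ht
    · simp only [Set.mem_singleton_iff]
      intro h
      exact havoid 0 hn'' (by simpa using h)
  refine ⟨σ', hσ', Set.ncard_lt_ncard ?_ (Set.toFinite _)⟩
  rw [Set.ssubset_iff_of_subset (hB.trans Set.diff_subset)]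
  exact ⟨c j0, hj0cyc, fun hmem => (hB hmem).2 rfl⟩

lemma exists_acyclic_good (hP1 : SatisfiesP1 E O) (hP2 : SatisfiesP2 E O) :
    ∃ σ, GoodFun E O σ ∧ ∀ v, ¬ InCyc O σ v := by
  classical
  have hex0 : ∃ σ, GoodFun E O σ := by
    choose f hf using hP1
    exact ⟨fun v => if h : v ∉ O then f v h else v,
      fun v hv => by simp only [dif_pos hv]; exact hf v hv⟩
  have hex : ∃ n, ∃ σ, GoodFun E O σ ∧ {v | InCyc O σ v}.ncard = n :=
    ⟨_, hex0.choose, hex0.choose_spec, rfl⟩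
  obtain ⟨σ, hσ, hcard⟩ := Nat.find_spec hex
  refine ⟨σ, hσ, fun v hv => ?_⟩
  obtain ⟨σ', hσ', hlt⟩ := decrease hP2 hσ ⟨v, hv⟩
  have := Nat.find_min' hex ⟨σ', hσ', rfl⟩
  omega

lemma partition_of_acyclic {σ : V → V} (hσ : GoodFun E O σ)
    (hac : ∀ v, ¬ InCyc O σ v) : ObservedPathPartition E O := by
  classical
  have hhit : ∀ v, ∃ n, σ^[n] v ∈ O := by
    intro v
    by_contra h
    push_neg at h
    obtain ⟨i, j, hij, heq⟩ := Finite.exists_ne_map_eq_of_infinite (fun n : ℕ => σ^[n] v)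
    have haux : ∀ i j : ℕ, i < j → σ^[i] v = σ^[j] v → False := by
      intro i j hlt heq
      apply hac (σ^[i] v)
      refine ⟨j - i, by omega, ?_, fun k _ => ?_⟩
      · rw [← Function.iterate_add_apply]
        have : j - i + i = j := by omega
        rw [this]
        exact heq.symm
      · rw [← Function.iterate_add_apply]
        exact h _
    rcases Nat.lt_or_ge i j with hlt | hge
    · exact haux i j hlt heq
    · exact haux j i (by omega) heq.symm
  set d : V → ℕ := fun v => Nat.find (hhit v) with hd
  have hdO : ∀ v, σ^[d v] v ∈ O := fun v => Nat.find_spec (hhit v)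
  have hdmin : ∀ v, ∀ k < d v, σ^[k] v ∉ O := fun v k hk => Nat.find_min (hhit v) hk
  have hdle : ∀ v (m : ℕ), σ^[m] v ∈ O → d v ≤ m := fun v m hm => Nat.find_min' (hhit v) hm
  -- within-chain / cross-chain uniqueness for iterates below d
  have haux2 : ∀ v (a b : ℕ), a < b → b ≤ d v → σ^[a] v = σ^[b] v → False := by
    intro v a b hab hb heq
    apply hac (σ^[a] v)
    refine ⟨b - a, by omega, ?_, fun k hk => ?_⟩
    · rw [← Function.iterate_add_apply]
      have : b - a + a = b := by omega
      rw [this]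
      exact heq.symm
    · rw [← Function.iterate_add_apply]
      exact hdmin v (k + a) (by omega)
  have hdistinct : ∀ v (a b : ℕ), a ≤ d v → b ≤ d v → σ^[a] v = σ^[b] v → a = b := by
    intro v a b ha hb heq
    rcases Nat.lt_trichotomy a b with h | h | h
    · exact absurd heq (fun hh => haux2 v a b h hb hh)
    · exact h
    · exact absurd heq.symm (fun hh => haux2 v b a h ha hh)
  have hdlt : ∀ v, d v < Fintype.card V := by
    intro v
    have hinj : Function.Injective (fun k : Fin (d v + 1) => σ^[k.val] v) := by
      intro a b hab
      exact Fin.ext (hdistinct v a.val b.val (by omega) (by omega) hab)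
    have := Fintype.card_le_of_injective _ hinj
    simpa using this
  have hdsucc : ∀ u, u ∉ O → d (σ u) + 1 = d u := by
    intro u hu
    have h1 : d u ≤ d (σ u) + 1 := by
      apply hdle
      rw [Function.iterate_succ_apply]
      exact hdO (σ u)
    have h2 : 0 < d u := by
      rcases Nat.eq_zero_or_pos (d u) with h | h
      · exact absurd (by simpa [h] using hdO u) hu
      · exact h
    have h3 : d (σ u) ≤ d u - 1 := by
      apply hdle
      have h5 : d u - 1 + 1 = d u := by omega
      have h6 := hdO u
      rw [← h5, Function.iterate_succ_apply] at h6
      exact h6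
    omega
  set S : Set V := {v | ∀ u, u ∉ O → σ u ≠ v} with hS
  have hreach' : ∀ (N : ℕ) v, Fintype.card V ≤ N + d v → ∃ u ∈ S, ∃ k ≤ d u, σ^[k] u = v := by
    intro N
    induction N with
    | zero =>
      intro v hN
      exact absurd (hdlt v) (by omega)
    | succ N ih =>
      intro v hN
      by_cases hv : v ∈ S
      · exact ⟨v, hv, 0, Nat.zero_le _, rfl⟩
      · simp only [hS, Set.mem_setOf_eq] at hv
        push_neg at hv
        obtain ⟨u, huO, hu⟩ := hv
        have hdu : d v + 1 = d u := by rw [← hu]; exact hdsucc u huO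
        obtain ⟨u0, hu0, k, hk, hku⟩ := ih u (by omega)
        have hklt : k < d u0 := by
          rcases Nat.lt_or_ge k (d u0) with h | h
          · exact h
          · exfalso
            have : k = d u0 := by omega
            rw [this] at hku
            exact huO (hku ▸ hdO u0)
        refine ⟨u0, hu0, k + 1, by omega, ?_⟩
        rw [Function.iterate_succ_apply', hku, hu]
  have hreach : ∀ v, ∃ u ∈ S, ∃ k ≤ d u, σ^[k] u = v :=
    fun v => hreach' (Fintype.card V) v (by omega)
  have huniq : ∀ (a : ℕ) {u1 u2 : V} (b : ℕ), u1 ∈ S → u2 ∈ S → a ≤ d u1 → b ≤ d u2 →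
      σ^[a] u1 = σ^[b] u2 → u1 = u2 ∧ a = b := by
    intro a
    induction a with
    | zero =>
      intro u1 u2 b h1 h2 ha hb heq
      simp only [Function.iterate_zero, id] at heq
      cases b with
      | zero => simp only [Function.iterate_zero, id] at heq; exact ⟨heq, rfl⟩
      | succ b =>
        exfalso
        apply h1 (σ^[b] u2) (hdmin u2 b (by omega))
        rw [← Function.iterate_succ_apply' σ b u2]
        exact heq.symm
    | succ a ih =>
      intro u1 u2 b h1 h2 ha hb heq
      cases b with
      | zero =>
        exfalso
        simp only [Function.iterate_zero, id] at heq
        apply h2 (σ^[a] u1) (hdmin u1 a (by omega))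
        rw [← Function.iterate_succ_apply' σ a u1]
        exact heq
      | succ b =>
        have heq' : σ^[a] u1 = σ^[b] u2 := by
          apply good_inj hσ (hdmin u1 a (by omega)) (hdmin u2 b (by omega))
          rw [← Function.iterate_succ_apply' σ a u1, ← Function.iterate_succ_apply' σ b u2]
          exact heq
        obtain ⟨h, h'⟩ := ih b h1 h2 (by omega) (by omega) heq'
        exact ⟨h, by omega⟩
  haveI : Fintype ↥S := Fintype.ofFinite _
  set e : Fin (Fintype.card ↥S) → ↥S := fun i => (Fintype.equivFin ↥S).symm i with he
  refine ⟨Fintype.card ↥S, fun i => d (e i : V), fun i k => σ^[k.val] (e i : V), ?_, ?_, ?_⟩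
  · intro i
    refine ⟨?_, ?_, ?_, ?_⟩
    · intro k1 k2 hk
      exact Fin.ext (hdistinct _ k1.val k2.val (Nat.lt_succ_iff.mp k1.isLt)
        (Nat.lt_succ_iff.mp k2.isLt) hk)
    · intro k
      have h1 := hσ (σ^[k.val] (e i : V)) (hdmin _ k.val k.isLt)
      show UniqueInNbr E (σ^[k.castSucc.val] (e i : V)) (σ^[k.succ.val] (e i : V))
      simp only [Fin.coe_castSucc, Fin.val_succ]
      rw [Function.iterate_succ_apply']
      exact h1
    · show σ^[(Fin.last (d (e i : V))).val] (e i : V) ∈ O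
      simp only [Fin.val_last]
      exact hdO _
    · intro k hk
      by_contra hne
      have hlt : k.val < d (e i : V) := by
        have h1 : k.val < d (e i : V) + 1 := k.isLt
        have h2 : k.val ≠ d (e i : V) := fun h => hne (Fin.ext (by rw [h, Fin.val_last]))
        omega
      exact hdmin _ k.val hlt hk
  · intro i j hij
    rw [Set.disjoint_left]
    rintro x ⟨k1, hk1⟩ ⟨k2, hk2⟩
    rw [← hk2] at hk1
    obtain ⟨h, -⟩ := huniq k1.val k2.val (e i).2 (e j).2 (Nat.lt_succ_iff.mp k1.isLt)
      (Nat.lt_succ_iff.mp k2.isLt) hk1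
    exact hij (by
      apply (Fintype.equivFin ↥S).symm.injective
      exact Subtype.ext h)
  · rw [Set.eq_univ_iff_forall]
    intro v
    obtain ⟨u, hu, k, hk, hkv⟩ := hreach v
    rw [Set.mem_iUnion]
    refine ⟨Fintype.equivFin ↥S ⟨u, hu⟩, ?_⟩
    have hcoe : ((e (Fintype.equivFin ↥S ⟨u, hu⟩)) : V) = u := by
      simp only [he, Equiv.symm_apply_apply]
    refine ⟨⟨k, ?_⟩, ?_⟩
    · show k < d ((e (Fintype.equivFin ↥S ⟨u, hu⟩)) : V) + 1
      rw [hcoe]; omega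
    · show σ^[k] ((e (Fintype.equivFin ↥S ⟨u, hu⟩)) : V) = v
      rw [hcoe]; exact hkv


lemma partition_P1P2 (h : ObservedPathPartition E O) :
    SatisfiesP1 E O ∧ SatisfiesP2 E O := by
  classical
  obtain ⟨r, ℓ, p, hpaths, hdisj, hcover⟩ := h
  have hcov : ∀ v : V, ∃ (i : Fin r) (k : Fin (ℓ i + 1)), p i k = v := by
    intro v
    have : v ∈ ⋃ i, Set.range (p i) := hcover ▸ Set.mem_univ v
    rw [Set.mem_iUnion] at this
    obtain ⟨i, k, hk⟩ := this
    exact ⟨i, k, hk⟩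
  have hkey : ∀ (a b : Fin r) (x : Fin (ℓ a + 1)) (y : Fin (ℓ b + 1)),
      p a x = p b y → a = b ∧ x.val = y.val := by
    intro a b x y hxy
    have hab : a = b := by
      by_contra hne
      exact Set.disjoint_left.mp (hdisj hne) ⟨x, rfl⟩ ⟨y, hxy.symm⟩
    subst hab
    exact ⟨rfl, congrArg Fin.val ((hpaths a).1 hxy)⟩
  have hnotlast : ∀ (i : Fin r) (k : Fin (ℓ i + 1)), p i k ∉ O → k.val < ℓ i := by
    intro i k hO
    have h1 : k.val < ℓ i + 1 := k.isLt
    have h2 : k.val ≠ ℓ i := by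
      intro h
      apply hO
      have : k = Fin.last (ℓ i) := Fin.ext (by rw [h, Fin.val_last])
      rw [this]
      exact (hpaths i).2.2.1
    omega
  have hsuccnbr : ∀ (i : Fin r) (k : Fin (ℓ i + 1)) (hk : k.val < ℓ i),
      UniqueInNbr E (p i k) (p i ⟨k.val + 1, by omega⟩) := by
    intro i k hk
    have h1 := (hpaths i).2.1 ⟨k.val, hk⟩
    have h2 : (⟨k.val, hk⟩ : Fin (ℓ i)).castSucc = k := Fin.ext rfl
    have h3 : (⟨k.val, hk⟩ : Fin (ℓ i)).succ = ⟨k.val + 1, by omega⟩ := Fin.ext rfl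
    rwa [h2, h3] at h1
  constructor
  · -- P1
    intro v hv
    obtain ⟨i, k, hk⟩ := hcov v
    have hlt : k.val < ℓ i := hnotlast i k (hk ▸ hv)
    exact ⟨p i ⟨k.val + 1, by omega⟩, hk ▸ hsuccnbr i k hlt⟩
  · -- P2
    intro m c hcyc hcO
    by_contra hcon
    unfold CycleSatisfiesP2 at hcon
    push_neg at hcon
    have hch : ∀ j : Fin (m + 1), ∃ (i : Fin r) (k : Fin (ℓ i + 1)), p i k = c j :=
      fun j => hcov (c j)
    choose i k hk using hch
    have hklt : ∀ j, (k j).val < ℓ (i j) := fun j => hnotlast _ _ ((hk j) ▸ hcO j)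
    set s : Fin (m + 1) → V := fun j => p (i j) ⟨(k j).val + 1, by have := hklt j; omega⟩
      with hs
    have hsu : ∀ j, UniqueInNbr E (c j) (s j) := by
      intro j
      have := hsuccnbr (i j) (k j) (hklt j)
      rwa [hk j] at this
    have hs_on : ∀ j, ∃ j', c j' = s j := by
      intro j
      by_contra hno
      push_neg at hno
      exact hcon (s j) hno j (hsu j)
    have hsucc : ∀ j, s j = c (j + 1) := by
      intro j
      obtain ⟨j', hj'⟩ := hs_on j
      have hedge : E (c (j' - 1)) (c j') := by
        have := hcyc.2 (j' - 1)
        rwa [sub_add_cancel] at this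
      have h1 : c (j' - 1) = c j := (hsu j).2 (c (j' - 1)) (hj' ▸ hedge)
      have h2 : j' - 1 = j := hcyc.1 h1
      have h3 : j' = j + 1 := by rw [← h2, sub_add_cancel]
      rw [← hj', h3]
    have hkk : ∀ j, (k (j + 1)).val = (k j).val + 1 := by
      intro j
      have h1 : p (i (j + 1)) (k (j + 1)) =
          p (i j) ⟨(k j).val + 1, by have := hklt j; omega⟩ := by
        rw [hk (j + 1), ← hsucc j]
      exact (hkey _ _ _ _ h1).2
    have hgen : ∀ t : ℕ, (k ((t : Fin (m + 1)))).val = (k 0).val + t := by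
      intro t
      induction t with
      | zero =>
        exact (congrArg (fun j => (k j).val) Nat.cast_zero).trans (Nat.add_zero _).symm
      | succ t ih =>
        have hc1 : ((t + 1 : ℕ) : Fin (m + 1)) = (t : Fin (m + 1)) + 1 := by
          push_cast
          ring
        rw [hc1, hkk, ih]
        omega
    have hfin := hgen (m + 1)
    rw [Fin.natCast_self] at hfin
    omega


end Aux

/-- A marked digraph satisfies both Property P1 and Property P2 iff its vertex
set can be partitioned into vertex-disjoint observed paths. -/
theorem P1_P2_iff_observed_path_partition {V : Type*} [Fintype V]
    (E : V → V → Prop) (O : Set V) :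
    (SatisfiesP1 E O ∧ SatisfiesP2 E O) ↔ ObservedPathPartition E O := by
  constructor
  · rintro ⟨hP1, hP2⟩
    obtain ⟨σ, hσ, hac⟩ := exists_acyclic_good hP1 hP2
    exact partition_of_acyclic hσ hac
  · exact partition_P1P2
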